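/- Let a be an element of a ring R such that a = e + u with e idempotent, u a unit, eu = ue, and a - a² nilpotent. Then a can be written as a = f + n with f idempotent, n nilpotent, and fn = nf. -/

import Mathlib

/-- If `a = e + u` with `e` idempotent, `u` a unit, `eu = ue` and `a - a²`
nilpotent, then `a` is strongly nil clean. -/
theorem stronglyNilClean_of_stronglyClean_of_nilpotent_sub_sq {R : Type*} [Ring R]
    (a e u : R) (he : IsIdempotentElem e) (hu : IsUnit u) (hcomm : e * u = u * e)
    (ha : a = e + u) (hnil : IsNilpotent (a - a ^ 2)) :
    ∃ f n : R, IsIdempotentElem f ∧ IsNilpotent n ∧ f * n = n * f ∧ a = f + n := by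
  refine ⟨1 - e, a - (1 - e), ?_, ?_, ?_, by abel⟩
  · have := he
    unfold IsIdempotentElem at *
    rw [mul_sub, sub_mul, sub_mul, mul_one, one_mul, he]
    noncomm_ring
  · -- a - (1 - e) = 2e + u - 1 = -(u⁻¹ * (a - a^2))
    have hue : Commute u e := hcomm.symm
    have hua : Commute u a := by rw [ha]; exact hue.add_right (Commute.refl u)
    have hun : Commute u (a - a ^ 2) := hua.sub_right (hua.pow_right 2)
    have h1 : Commute (↑hu.unit⁻¹ : R) (a - a ^ 2) := by
      apply Commute.units_inv_left
      rw [hu.unit_spec]; exact hun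
    have hn : IsNilpotent ((↑hu.unit⁻¹ : R) * (a - a ^ 2)) :=
      h1.isNilpotent_mul_left hnil
    have key : a - a ^ 2 = u * (1 - 2 * e - u) := by
      rw [ha, sq]
      rw [mul_sub, mul_sub, mul_one, mul_add, add_mul, add_mul, ← hcomm, he, hcomm]
      noncomm_ring
    have hval : a - (1 - e) = -((↑hu.unit⁻¹ : R) * (a - a ^ 2)) := by
      rw [key, ← mul_assoc]
      have h2 : (↑hu.unit⁻¹ : R) * u = 1 := hu.val_inv_mul
      rw [h2, one_mul, ha]
      noncomm_ring
    rw [hval]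
    exact hn.neg
  · have hea : Commute e a := by rw [ha]; exact (Commute.refl e).add_right hcomm
    have : Commute (1 - e) (a - (1 - e)) :=
      ((Commute.one_left a).sub_left hea).sub_right (Commute.refl _)
    exact this
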